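/- If λ1, λ2, λ3, λ4 are all nonzero, then the extended nested exchangeable correlation matrix R is invertible and its inverse is given explicitly by R^{−1} = (1/λ1) I_{MKL} − ((α0−α1)/(λ1 λ2)) I_{MK} ⊗ J_L − ((α1−α2)/(λ2 λ3)) I_M ⊗ J_{KL} − (α2/(λ3 λ4)) J_{MKL}. -/

import Mathlib

open Matrix Polynomial Finset

noncomputable section

/-- Extended nested exchangeable correlation matrix: the ((j,k,l),(j',k',l')) entry equals
1 if (j,k,l)=(j',k',l'), `a0` if j=j', k=k', l≠l', `a1` if j=j', k≠k', and `a2` if j≠j'. -/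
def Rmat (M K L : ℕ) (a0 a1 a2 : ℝ) :
    Matrix (Fin M × Fin K × Fin L) (Fin M × Fin K × Fin L) ℝ :=
  Matrix.of fun p q =>
    if p = q then 1
    else if p.1 = q.1 ∧ p.2.1 = q.2.1 then a0
    else if p.1 = q.1 then a1
    else a2

def lam1 (a0 : ℝ) : ℝ := 1 - a0

def lam2 (L : ℕ) (a0 a1 : ℝ) : ℝ := 1 + ((L : ℝ) - 1) * a0 - (L : ℝ) * a1

def lam3 (K L : ℕ) (a0 a1 a2 : ℝ) : ℝ :=
  1 + ((L : ℝ) - 1) * a0 + (L : ℝ) * ((K : ℝ) - 1) * a1 - (L : ℝ) * (K : ℝ) * a2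

def lam4 (M K L : ℕ) (a0 a1 a2 : ℝ) : ℝ :=
  1 + ((L : ℝ) - 1) * a0 + (L : ℝ) * ((K : ℝ) - 1) * a1
    + (L : ℝ) * (K : ℝ) * ((M : ℝ) - 1) * a2

/- ### Auxiliary material -/

lemma card_fst_eq {α β : Type*} [Fintype α] [Fintype β] [DecidableEq α] (a : α) :
    #(filter (fun x : α × β => x.1 = a) univ) = Fintype.card β := by
  have : (filter (fun x : α × β => x.1 = a) univ) = {a} ×ˢ univ := by
    ext ⟨x, y⟩; simp [eq_comm]
  rw [this]; simp

lemma card_fst_eq' {α β : Type*} [Fintype α] [Fintype β] [DecidableEq α] (a : α) :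
    #(filter (fun x : α × β => a = x.1) univ) = Fintype.card β := by
  have : (filter (fun x : α × β => a = x.1) univ) = {a} ×ˢ univ := by
    ext ⟨x, y⟩; simp [eq_comm]
  rw [this]; simp

abbrev NEidx (M K L : ℕ) := Fin M × Fin K × Fin L

def NEA1 (M K L : ℕ) : Matrix (NEidx M K L) (NEidx M K L) ℝ :=
  Matrix.of fun p q => if p.1 = q.1 ∧ p.2.1 = q.2.1 then 1 else 0
def NEA2 (M K L : ℕ) : Matrix (NEidx M K L) (NEidx M K L) ℝ :=
  Matrix.of fun p q => if p.1 = q.1 then 1 else 0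
def NEA3 (M K L : ℕ) : Matrix (NEidx M K L) (NEidx M K L) ℝ :=
  Matrix.of fun _ _ => 1

variable (M K L : ℕ)

lemma NEA11 : NEA1 M K L * NEA1 M K L = (L : ℝ) • NEA1 M K L := by
  ext ⟨j,k,l⟩ ⟨j',k',l'⟩
  simp [NEA1, mul_apply, Fintype.sum_prod_type, ite_and, mul_comm]
  split_ifs <;> simp
lemma NEA12 : NEA1 M K L * NEA2 M K L = (L : ℝ) • NEA2 M K L := by
  ext ⟨j,k,l⟩ ⟨j',k',l'⟩
  simp [NEA1, NEA2, mul_apply, Fintype.sum_prod_type, ite_and, mul_comm]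
  split_ifs <;> simp [card_fst_eq, card_fst_eq']
lemma NEA21 : NEA2 M K L * NEA1 M K L = (L : ℝ) • NEA2 M K L := by
  ext ⟨j,k,l⟩ ⟨j',k',l'⟩
  simp [NEA1, NEA2, mul_apply, Fintype.sum_prod_type, ite_and, mul_comm]
  split_ifs <;> simp [card_fst_eq, card_fst_eq']
lemma NEA13 : NEA1 M K L * NEA3 M K L = (L : ℝ) • NEA3 M K L := by
  ext ⟨j,k,l⟩ ⟨j',k',l'⟩
  simp [NEA1, NEA3, mul_apply, Fintype.sum_prod_type, ite_and, mul_comm, card_fst_eq, card_fst_eq']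
lemma NEA31 : NEA3 M K L * NEA1 M K L = (L : ℝ) • NEA3 M K L := by
  ext ⟨j,k,l⟩ ⟨j',k',l'⟩
  simp [NEA1, NEA3, mul_apply, Fintype.sum_prod_type, ite_and, mul_comm, card_fst_eq, card_fst_eq']
lemma NEA22 : NEA2 M K L * NEA2 M K L = ((K : ℝ) * L) • NEA2 M K L := by
  ext ⟨j,k,l⟩ ⟨j',k',l'⟩
  simp [NEA2, mul_apply, Fintype.sum_prod_type, ite_and, mul_comm]
  split_ifs <;> simp [card_fst_eq, card_fst_eq', mul_comm]
lemma NEA23 : NEA2 M K L * NEA3 M K L = ((K : ℝ) * L) • NEA3 M K L := by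
  ext ⟨j,k,l⟩ ⟨j',k',l'⟩
  simp [NEA2, NEA3, mul_apply, Fintype.sum_prod_type, ite_and, mul_comm, card_fst_eq, card_fst_eq']
lemma NEA32 : NEA3 M K L * NEA2 M K L = ((K : ℝ) * L) • NEA3 M K L := by
  ext ⟨j,k,l⟩ ⟨j',k',l'⟩
  simp [NEA2, NEA3, mul_apply, Fintype.sum_prod_type, ite_and, mul_comm, card_fst_eq, card_fst_eq']
lemma NEA33 : NEA3 M K L * NEA3 M K L = ((M : ℝ) * ((K : ℝ) * L)) • NEA3 M K L := by
  ext ⟨j,k,l⟩ ⟨j',k',l'⟩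
  simp [NEA3, mul_apply, Fintype.sum_prod_type, mul_comm, mul_assoc]

lemma Rmat_decomp (a0 a1 a2 : ℝ) :
    Rmat M K L a0 a1 a2 =
      lam1 a0 • (1 : Matrix (NEidx M K L) (NEidx M K L) ℝ)
      + (a0 - a1) • NEA1 M K L + (a1 - a2) • NEA2 M K L + a2 • NEA3 M K L := by
  ext p q
  simp only [Rmat, NEA1, NEA2, NEA3, lam1, Matrix.add_apply, Matrix.smul_apply,
    Matrix.one_apply, Matrix.of_apply, smul_eq_mul]
  split_ifs <;> simp_all [Prod.ext_iff] <;> ring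

def Bmat (M K L : ℕ) (a0 a1 a2 : ℝ) : Matrix (NEidx M K L) (NEidx M K L) ℝ :=
  (1 / lam1 a0) • (1 : Matrix (NEidx M K L) (NEidx M K L) ℝ)
  - ((a0 - a1) / (lam1 a0 * lam2 L a0 a1)) • NEA1 M K L
  - ((a1 - a2) / (lam2 L a0 a1 * lam3 K L a0 a1 a2)) • NEA2 M K L
  - (a2 / (lam3 K L a0 a1 a2 * lam4 M K L a0 a1 a2)) • NEA3 M K L

lemma Rmat_mul_Bmat (a0 a1 a2 : ℝ)
    (h1 : lam1 a0 ≠ 0) (h2 : lam2 L a0 a1 ≠ 0)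
    (h3 : lam3 K L a0 a1 a2 ≠ 0) (h4 : lam4 M K L a0 a1 a2 ≠ 0) :
    Rmat M K L a0 a1 a2 * Bmat M K L a0 a1 a2 = 1 := by
  rw [Rmat_decomp, Bmat]
  simp only [Matrix.add_mul, Matrix.mul_sub, Matrix.smul_mul, Matrix.mul_smul,
    Matrix.mul_one, Matrix.one_mul, smul_smul,
    NEA11, NEA12, NEA21, NEA13, NEA31, NEA22, NEA23, NEA32, NEA33]
  match_scalars <;> (field_simp <;> (simp only [lam1, lam2, lam3, lam4]; ring))

lemma Bmat_eq_of (a0 a1 a2 : ℝ) :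
    Bmat M K L a0 a1 a2 = Matrix.of (fun p q =>
      (if p = q then 1 / lam1 a0 else 0)
      - (if p.1 = q.1 ∧ p.2.1 = q.2.1 then
          (a0 - a1) / (lam1 a0 * lam2 L a0 a1) else 0)
      - (if p.1 = q.1 then
          (a1 - a2) / (lam2 L a0 a1 * lam3 K L a0 a1 a2) else 0)
      - a2 / (lam3 K L a0 a1 a2 * lam4 M K L a0 a1 a2) :
      Matrix (Fin M × Fin K × Fin L) (Fin M × Fin K × Fin L) ℝ) := by
  ext p q
  simp only [Bmat, NEA1, NEA2, NEA3, Matrix.sub_apply, Matrix.smul_apply,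
    Matrix.one_apply, Matrix.of_apply, smul_eq_mul]
  split_ifs <;> ring

/-- if `λ1, λ2, λ3, λ4` are nonzero then `Rmat` is invertible with explicit
inverse `(1/λ1) I - ((a0-a1)/(λ1 λ2)) I_{MK} ⊗ J_L - ((a1-a2)/(λ2 λ3)) I_M ⊗ J_{KL}
- (a2/(λ3 λ4)) J_{MKL}`. -/
theorem Rmat_inv_explicit (M K L : ℕ) (hM : 2 ≤ M) (hK : 2 ≤ K) (hL : 2 ≤ L)
    (a0 a1 a2 : ℝ)
    (h1 : lam1 a0 ≠ 0) (h2 : lam2 L a0 a1 ≠ 0)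
    (h3 : lam3 K L a0 a1 a2 ≠ 0) (h4 : lam4 M K L a0 a1 a2 ≠ 0) :
    IsUnit (Rmat M K L a0 a1 a2) ∧
    (Rmat M K L a0 a1 a2)⁻¹ = Matrix.of (fun p q =>
      (if p = q then 1 / lam1 a0 else 0)
      - (if p.1 = q.1 ∧ p.2.1 = q.2.1 then
          (a0 - a1) / (lam1 a0 * lam2 L a0 a1) else 0)
      - (if p.1 = q.1 then
          (a1 - a2) / (lam2 L a0 a1 * lam3 K L a0 a1 a2) else 0)
      - a2 / (lam3 K L a0 a1 a2 * lam4 M K L a0 a1 a2) :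
      Matrix (Fin M × Fin K × Fin L) (Fin M × Fin K × Fin L) ℝ) := by
  have hmul := Rmat_mul_Bmat M K L a0 a1 a2 h1 h2 h3 h4
  exact ⟨(Matrix.isUnit_iff_isUnit_det _).mpr (Matrix.isUnit_det_of_right_inverse hmul),
    (Matrix.inv_eq_right_inv hmul).trans (Bmat_eq_of M K L a0 a1 a2)⟩
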